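/- In the setting of the isotropic metric ds² = f(H)dt² − g(H)d\vec{x}² on ℝ⁴ (with Γ_{μνλ} the Christoffel symbols lowered by η = diag(+1,−1,−1,−1)), let u : ℝ → ℝ be a smooth solution of u' = −2f'/(3f) − 2f'/(3g) and let v = (4/3)·log∘g. Define the symmetric-free part F_{μνλ} = Γ_{μνλ} − Γ_{(μνλ)}, where Γ_{(μνλ)} = (1/3!)·Σ_{σ ∈ Perm(Fin 3)} Γ_{μ_{σ(1)}μ_{σ(2)}μ_{σ(3)}}. Then: F_{0j0} = F_{00j} = −¼ ∂_j(u∘H) for 1 ≤ j ≤ 3; F_{j00} = ½ ∂_j(u∘H) for 1 ≤ j ≤ 3; F_{kjk} = F_{kkj} = −¼ ∂_j(v∘H) for 1 ≤ j ≠ k ≤ 3; F_{jkk} = ½ ∂_j(v∘H) for 1 ≤ j ≠ k ≤ 3; and all other components of F are zero. -/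

import Mathlib

/-- The partial derivative of a function on `ℝ⁴` (or `ℝⁿ`) in the `j`-th coordinate
direction. -/
noncomputable def pdR {n : ℕ} (j : Fin n) (f : (Fin n → ℝ) → ℝ) : (Fin n → ℝ) → ℝ :=
  fun x => fderiv ℝ f x (Pi.single j 1)

/-- The spatial part `(x¹, x², x³)` of a point of `ℝ⁴` (with `x⁰ = t`). -/
def sp (x : Fin 4 → ℝ) : Fin 3 → ℝ := fun j => x j.succ

/-- The diagonal metric components of `ds² = f(H) dt² − g(H) d\vec{x}²`:
`g₀₀ = f(H(x¹,x²,x³))`, `g_jj = −g(H(x¹,x²,x³))` for `j = 1,2,3`, zero off-diagonal. -/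
noncomputable def met (f g : ℝ → ℝ) (H : (Fin 3 → ℝ) → ℝ) (μ ν : Fin 4) :
    (Fin 4 → ℝ) → ℝ :=
  fun x => if μ = ν then (if μ = 0 then f (H (sp x)) else -(g (H (sp x)))) else 0

/-- The inverse metric components: `g⁰⁰ = 1/f(H)`, `g^jj = −1/g(H)`, zero off-diagonal. -/
noncomputable def metInv (f g : ℝ → ℝ) (H : (Fin 3 → ℝ) → ℝ) (μ ν : Fin 4) :
    (Fin 4 → ℝ) → ℝ :=
  fun x => if μ = ν then (if μ = 0 then (f (H (sp x)))⁻¹ else -(g (H (sp x)))⁻¹) else 0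

/-- The flat metric `η = diag(+1, −1, −1, −1)`. -/
noncomputable def eta (μ ν : Fin 4) : ℝ :=
  if μ = ν then (if μ = 0 then 1 else -1) else 0

/-- The Christoffel symbols
`Γ^τ_{νλ} = ½ ∑_ρ g^{τρ} (∂_ν g_{ρλ} + ∂_λ g_{ρν} − ∂_ρ g_{νλ})`. -/
noncomputable def chrUp (f g : ℝ → ℝ) (H : (Fin 3 → ℝ) → ℝ) (τ ν lam : Fin 4) :
    (Fin 4 → ℝ) → ℝ :=
  fun x => (1 / 2 : ℝ) * ∑ ρ : Fin 4, metInv f g H τ ρ x *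
    (pdR ν (met f g H ρ lam) x + pdR lam (met f g H ρ ν) x - pdR ρ (met f g H ν lam) x)

/-- The Christoffel symbols with the upper index lowered by the flat metric `η`:
`Γ_{μνλ} = ∑_τ η_{μτ} Γ^τ_{νλ}`. -/
noncomputable def chrLow (f g : ℝ → ℝ) (H : (Fin 3 → ℝ) → ℝ) (μ ν lam : Fin 4) :
    (Fin 4 → ℝ) → ℝ :=
  fun x => ∑ τ : Fin 4, eta μ τ * chrUp f g H τ ν lam x

/-- The complete symmetrization `Γ_{(μνλ)} = (1/3!) ∑_{σ ∈ Perm(Fin 3)}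
Γ_{μ_{σ(1)} μ_{σ(2)} μ_{σ(3)}}` of a 3-indexed family of functions. -/
noncomputable def symPart (Γ : Fin 4 → Fin 4 → Fin 4 → (Fin 4 → ℝ) → ℝ)
    (μ ν lam : Fin 4) : (Fin 4 → ℝ) → ℝ :=
  fun x => (Nat.factorial 3 : ℝ)⁻¹ * ∑ σ : Equiv.Perm (Fin 3),
    Γ (![μ, ν, lam] (σ 0)) (![μ, ν, lam] (σ 1)) (![μ, ν, lam] (σ 2)) x

/-- The symmetric-free part `F_{μνλ} = Γ_{μνλ} − Γ_{(μνλ)}` of the η-lowered Christoffel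
symbols of the isotropic metric. -/
noncomputable def Fsf (f g : ℝ → ℝ) (H : (Fin 3 → ℝ) → ℝ) (μ ν lam : Fin 4) :
    (Fin 4 → ℝ) → ℝ :=
  fun x => chrLow f g H μ ν lam x - symPart (chrLow f g H) μ ν lam x

/-! ### Auxiliary lemmas -/

noncomputable def spCLM : (Fin 4 → ℝ) →L[ℝ] (Fin 3 → ℝ) :=
  ContinuousLinearMap.pi (fun j : Fin 3 => ContinuousLinearMap.proj j.succ)

lemma hasFDeriv_Hsp {H : (Fin 3 → ℝ) → ℝ} (hH : ContDiff ℝ (⊤ : ℕ∞) H) (x : Fin 4 → ℝ) :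
    HasFDerivAt (fun y => H (sp y)) ((fderiv ℝ H (sp x)).comp spCLM) x := by
  have h1 : HasFDerivAt H (fderiv ℝ H (sp x)) (sp x) :=
    (hH.differentiable (by norm_num) (sp x)).hasFDerivAt
  exact h1.comp x (spCLM.hasFDerivAt)

lemma pd_comp' {H : (Fin 3 → ℝ) → ℝ} (hH : ContDiff ℝ (⊤ : ℕ∞) H)
    {φ : ℝ → ℝ} {φ' : ℝ} (x : Fin 4 → ℝ) (hφ : HasDerivAt φ φ' (H (sp x))) (j : Fin 4) :
    pdR j (fun y => φ (H (sp y))) x = φ' * pdR j (fun y => H (sp y)) x := by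
  have h1 := hasFDeriv_Hsp hH x
  have h2 : HasFDerivAt (fun y => φ (H (sp y))) (φ' • ((fderiv ℝ H (sp x)).comp spCLM)) x :=
    hφ.comp_hasFDerivAt x h1
  simp only [pdR, h2.fderiv, h1.fderiv]
  simp

lemma pd_Hsp_zero {H : (Fin 3 → ℝ) → ℝ} (hH : ContDiff ℝ (⊤ : ℕ∞) H) (x : Fin 4 → ℝ) :
    pdR 0 (fun y => H (sp y)) x = 0 := by
  have h1 := hasFDeriv_Hsp hH x
  simp only [pdR, h1.fderiv]
  have hz : spCLM (Pi.single (0 : Fin 4) 1) = 0 := by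
    funext j
    simp [spCLM, Pi.single_eq_of_ne (Fin.succ_ne_zero j)]
  simp [ContinuousLinearMap.comp_apply, hz]

lemma pd_met {H : (Fin 3 → ℝ) → ℝ} {f g : ℝ → ℝ} (hH : ContDiff ℝ (⊤ : ℕ∞) H)
    (hf : ContDiff ℝ (⊤ : ℕ∞) f) (hg : ContDiff ℝ (⊤ : ℕ∞) g)
    (ρ lam j : Fin 4) (x : Fin 4 → ℝ) :
    pdR j (met f g H ρ lam) x =
      (if ρ = lam then (if ρ = 0 then deriv f (H (sp x)) else -(deriv g (H (sp x)))) else 0) *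
        pdR j (fun y => H (sp y)) x := by
  by_cases h1 : ρ = lam
  · by_cases h2 : ρ = 0
    · have hm : met f g H ρ lam = fun y => f (H (sp y)) := by
        funext y; subst h1 h2; simp [met]
      rw [hm, pd_comp' hH x ((hf.differentiable (by norm_num) _).hasDerivAt), if_pos h1,
        if_pos h2]
    · have hm : met f g H ρ lam = fun y => (fun t => -(g t)) (H (sp y)) := by
        funext y; subst h1; simp [met, h2]
      rw [hm, pd_comp' (φ := fun t => -(g t)) hH x (((hg.differentiable (by norm_num) _).hasDerivAt).neg), if_pos h1,
        if_neg h2]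
  · have hm : met f g H ρ lam = fun _ => (0:ℝ) := by
      funext y; simp [met, h1]
    rw [hm, if_neg h1]
    simp [pdR]

lemma sum_perm3 (G : Equiv.Perm (Fin 3) → ℝ) :
    ∑ σ : Equiv.Perm (Fin 3), G σ =
      G 1 + G (Equiv.swap 0 1) + G (Equiv.swap 0 2) + G (Equiv.swap 1 2) +
      G (Equiv.swap 0 1 * Equiv.swap 1 2) + G (Equiv.swap 0 2 * Equiv.swap 1 2) := by
  rw [show (Finset.univ : Finset (Equiv.Perm (Fin 3))) =
      {1, Equiv.swap 0 1, Equiv.swap 0 2, Equiv.swap 1 2,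
        Equiv.swap 0 1 * Equiv.swap 1 2, Equiv.swap 0 2 * Equiv.swap 1 2} from by decide]
  rw [Finset.sum_insert (by decide), Finset.sum_insert (by decide),
    Finset.sum_insert (by decide), Finset.sum_insert (by decide),
    Finset.sum_insert (by decide), Finset.sum_singleton]
  ring

lemma symPart_eq (Γ : Fin 4 → Fin 4 → Fin 4 → (Fin 4 → ℝ) → ℝ) (μ ν lam : Fin 4)
    (x : Fin 4 → ℝ) :
    symPart Γ μ ν lam x = (6:ℝ)⁻¹ *
      (Γ μ ν lam x + Γ ν μ lam x + Γ lam ν μ x + Γ μ lam ν x + Γ ν lam μ x + Γ lam μ ν x) := by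
  simp only [symPart, sum_perm3]
  norm_num [Nat.factorial]
  simp [Equiv.swap_apply_def]

lemma chrLow_eq {H : (Fin 3 → ℝ) → ℝ} {f g : ℝ → ℝ} (hH : ContDiff ℝ (⊤ : ℕ∞) H)
    (hf : ContDiff ℝ (⊤ : ℕ∞) f) (hg : ContDiff ℝ (⊤ : ℕ∞) g)
    (μ ν lam : Fin 4) (x : Fin 4 → ℝ) :
    chrLow f g H μ ν lam x =
      (if μ = 0 then (1:ℝ) else -1) *
        ((1/2) * (if μ = 0 then (f (H (sp x)))⁻¹ else -(g (H (sp x)))⁻¹) *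
          ((if μ = lam then (if μ = 0 then deriv f (H (sp x)) else -(deriv g (H (sp x)))) else 0) *
              pdR ν (fun y => H (sp y)) x
            + (if μ = ν then (if μ = 0 then deriv f (H (sp x)) else -(deriv g (H (sp x)))) else 0) *
              pdR lam (fun y => H (sp y)) x
            - (if ν = lam then (if ν = 0 then deriv f (H (sp x)) else -(deriv g (H (sp x)))) else 0) *
              pdR μ (fun y => H (sp y)) x)) := by
  simp only [chrLow, chrUp]
  rw [Finset.sum_eq_single μ]
  · rw [Finset.sum_eq_single μ]
    · rw [pd_met hH hf hg μ lam ν x, pd_met hH hf hg μ ν lam x, pd_met hH hf hg ν lam μ x]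
      simp only [eta, metInv, eq_self_iff_true, if_true]
      ring
    · intro ρ _ hρ
      simp [metInv, Ne.symm hρ]
    · intro hmem; exact absurd (Finset.mem_univ μ) hmem
  · intro τ _ hτ
    simp [eta, Ne.symm hτ]
  · intro hmem; exact absurd (Finset.mem_univ μ) hmem
set_option maxHeartbeats 4000000 in
/-- (The symmetric-free part of the connection of the isotropic metric
`ds² = f(H) dt² − g(H) d\vec{x}²`, Section 4 of the paper.)  With `u` a smooth solution of
`u' = −2f'/(3f) − 2f'/(3g)` and `v = (4/3) log∘g`:
`F_{0j0} = F_{00j} = −¼ ∂_j (u∘H)` for `1 ≤ j ≤ 3`;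
`F_{j00} = ½ ∂_j (u∘H)` for `1 ≤ j ≤ 3`;
`F_{kjk} = F_{kkj} = −¼ ∂_j (v∘H)` for `1 ≤ j ≠ k ≤ 3`;
`F_{jkk} = ½ ∂_j (v∘H)` for `1 ≤ j ≠ k ≤ 3`;
and all other components of `F` are zero. -/
theorem stmt13 (H : (Fin 3 → ℝ) → ℝ) (f g : ℝ → ℝ)
    (hH : ContDiff ℝ (⊤ : ℕ∞) H) (hf : ContDiff ℝ (⊤ : ℕ∞) f)
    (hg : ContDiff ℝ (⊤ : ℕ∞) g)
    (hfpos : ∀ t, 0 < f t) (hgpos : ∀ t, 0 < g t)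
    (u : ℝ → ℝ) (hu : ContDiff ℝ (⊤ : ℕ∞) u)
    (hueq : ∀ t, deriv u t = -(2 * deriv f t) / (3 * f t) - (2 * deriv f t) / (3 * g t))
    (v : ℝ → ℝ) (hv : v = fun t => (4 / 3 : ℝ) * Real.log (g t)) :
    ∀ x : Fin 4 → ℝ,
      (∀ j : Fin 4, j ≠ 0 →
        Fsf f g H 0 j 0 x = -(1 / 4 : ℝ) * pdR j (fun y => u (H (sp y))) x ∧
        Fsf f g H 0 0 j x = -(1 / 4 : ℝ) * pdR j (fun y => u (H (sp y))) x) ∧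
      (∀ j : Fin 4, j ≠ 0 →
        Fsf f g H j 0 0 x = (1 / 2 : ℝ) * pdR j (fun y => u (H (sp y))) x) ∧
      (∀ j k : Fin 4, j ≠ 0 → k ≠ 0 → j ≠ k →
        Fsf f g H k j k x = -(1 / 4 : ℝ) * pdR j (fun y => v (H (sp y))) x ∧
        Fsf f g H k k j x = -(1 / 4 : ℝ) * pdR j (fun y => v (H (sp y))) x) ∧
      (∀ j k : Fin 4, j ≠ 0 → k ≠ 0 → j ≠ k →
        Fsf f g H j k k x = (1 / 2 : ℝ) * pdR j (fun y => v (H (sp y))) x) ∧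
      (∀ μ ν lam : Fin 4,
        ¬ ((μ = 0 ∧ ν ≠ 0 ∧ lam = 0) ∨ (μ = 0 ∧ ν = 0 ∧ lam ≠ 0) ∨
           (μ ≠ 0 ∧ ν = 0 ∧ lam = 0) ∨ (μ ≠ 0 ∧ ν ≠ 0 ∧ lam = μ ∧ ν ≠ μ) ∨
           (μ ≠ 0 ∧ lam ≠ 0 ∧ ν = μ ∧ lam ≠ μ) ∨
           (μ ≠ 0 ∧ ν ≠ 0 ∧ ν = lam ∧ μ ≠ ν)) →
        Fsf f g H μ ν lam x = 0) := by
  intro x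
  have hf0 : f (H (sp x)) ≠ 0 := (hfpos _).ne'
  have hg0 : g (H (sp x)) ≠ 0 := (hgpos _).ne'
  have hP0 : pdR 0 (fun y => H (sp y)) x = 0 := pd_Hsp_zero hH x
  have hu' : ∀ j : Fin 4, pdR j (fun y => u (H (sp y))) x =
      (-(2 * deriv f (H (sp x))) / (3 * f (H (sp x)))
        - (2 * deriv f (H (sp x))) / (3 * g (H (sp x)))) * pdR j (fun y => H (sp y)) x := by
    intro j
    rw [pd_comp' hH x ((hu.differentiable (by norm_num) _).hasDerivAt) j, hueq]
  have hvd : HasDerivAt v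
      ((4/3 : ℝ) * ((g (H (sp x)))⁻¹ * deriv g (H (sp x)))) (H (sp x)) := by
    rw [hv]
    exact ((Real.hasDerivAt_log hg0).comp _
      ((hg.differentiable (by norm_num) _).hasDerivAt)).const_mul _
  have hv' : ∀ j : Fin 4, pdR j (fun y => v (H (sp y))) x =
      (4/3 : ℝ) * ((g (H (sp x)))⁻¹ * deriv g (H (sp x))) * pdR j (fun y => H (sp y)) x :=
    fun j => pd_comp' hH x hvd j
  refine ⟨?_, ?_, ?_, ?_, ?_⟩
  · intro j hj
    constructor <;>
    · simp only [Fsf, symPart_eq, chrLow_eq hH hf hg, hu' j]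
      simp only [hj, Ne.symm hj, hP0, eq_self_iff_true, if_true, if_false, ite_true, ite_false,
        mul_zero, zero_mul, add_zero, zero_add, sub_zero, zero_sub, mul_one, one_mul,
        neg_neg, mul_neg, neg_mul, neg_zero, sub_self]
      field_simp
      ring
  · intro j hj
    simp only [Fsf, symPart_eq, chrLow_eq hH hf hg, hu' j]
    simp only [hj, Ne.symm hj, hP0, eq_self_iff_true, if_true, if_false, ite_true, ite_false,
      mul_zero, zero_mul, add_zero, zero_add, sub_zero, zero_sub, mul_one, one_mul,
      neg_neg, mul_neg, neg_mul, neg_zero, sub_self]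
    field_simp
    ring
  · intro j k hj hk hjk
    constructor <;>
    · simp only [Fsf, symPart_eq, chrLow_eq hH hf hg, hv' j]
      simp only [hj, hk, hjk, Ne.symm hjk, Ne.symm hj, Ne.symm hk, hP0, eq_self_iff_true,
        if_true, if_false, ite_true, ite_false, mul_zero, zero_mul, add_zero, zero_add,
        sub_zero, zero_sub, mul_one, one_mul, neg_neg, mul_neg, neg_mul, neg_zero, sub_self]
      field_simp
      ring
  · intro j k hj hk hjk
    simp only [Fsf, symPart_eq, chrLow_eq hH hf hg, hv' j]
    simp only [hj, hk, hjk, Ne.symm hjk, Ne.symm hj, Ne.symm hk, hP0, eq_self_iff_true,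
      if_true, if_false, ite_true, ite_false, mul_zero, zero_mul, add_zero, zero_add,
      sub_zero, zero_sub, mul_one, one_mul, neg_neg, mul_neg, neg_mul, neg_zero, sub_self]
    field_simp
    ring
  · intro μ ν lam hnot
    by_cases hμ : μ = 0 <;> by_cases hν : ν = 0 <;> by_cases hlam : lam = 0
    · subst hμ hν hlam
      simp only [Fsf, symPart_eq, chrLow_eq hH hf hg]
      simp only [hP0, eq_self_iff_true, if_true, ite_true, mul_zero, zero_mul, add_zero,
        zero_add, sub_zero, zero_sub, sub_self, mul_one, one_mul, neg_zero]
    · exact absurd (Or.inr (Or.inl ⟨hμ, hν, hlam⟩)) hnot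
    · exact absurd (Or.inl ⟨hμ, hν, hlam⟩) hnot
    · subst hμ
      simp only [Fsf, symPart_eq, chrLow_eq hH hf hg]
      simp only [hν, hlam, Ne.symm hν, Ne.symm hlam, hP0, eq_self_iff_true, if_true, if_false,
        ite_true, ite_false, mul_zero, zero_mul, add_zero, zero_add, sub_zero, zero_sub,
        sub_self, mul_one, one_mul, neg_zero, neg_neg, mul_neg, neg_mul]
    · exact absurd (Or.inr (Or.inr (Or.inl ⟨hμ, hν, hlam⟩))) hnot
    · subst hν
      simp only [Fsf, symPart_eq, chrLow_eq hH hf hg]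
      simp only [hμ, hlam, Ne.symm hμ, Ne.symm hlam, hP0, eq_self_iff_true, if_true, if_false,
        ite_true, ite_false, mul_zero, zero_mul, add_zero, zero_add, sub_zero, zero_sub,
        sub_self, mul_one, one_mul, neg_zero, neg_neg, mul_neg, neg_mul]
    · subst hlam
      simp only [Fsf, symPart_eq, chrLow_eq hH hf hg]
      simp only [hμ, hν, Ne.symm hμ, Ne.symm hν, hP0, eq_self_iff_true, if_true, if_false,
        ite_true, ite_false, mul_zero, zero_mul, add_zero, zero_add, sub_zero, zero_sub,
        sub_self, mul_one, one_mul, neg_zero, neg_neg, mul_neg, neg_mul]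
    · by_cases hμν : μ = ν
      · by_cases hνlam : ν = lam
        · subst hμν hνlam
          simp only [Fsf, symPart_eq, chrLow_eq hH hf hg]
          simp only [hμ, eq_self_iff_true, if_true, if_false, ite_true, ite_false, mul_zero,
            zero_mul, add_zero, zero_add, sub_zero, zero_sub, sub_self, mul_one, one_mul,
            neg_zero, neg_neg, mul_neg, neg_mul]
          try ring
        · exact absurd (Or.inr (Or.inr (Or.inr (Or.inr (Or.inl
            ⟨hμ, hlam, hμν.symm, fun h => hνlam (h.trans hμν).symm⟩))))) hnot
      · by_cases hνlam : ν = lam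
        · exact absurd (Or.inr (Or.inr (Or.inr (Or.inr (Or.inr ⟨hμ, hν, hνlam, hμν⟩))))) hnot
        · by_cases hμlam : μ = lam
          · exact absurd (Or.inr (Or.inr (Or.inr (Or.inl
              ⟨hμ, hν, hμlam.symm, fun h => hμν h.symm⟩)))) hnot
          · simp only [Fsf, symPart_eq, chrLow_eq hH hf hg]
            simp only [hμ, hν, hlam, hμν, hνlam, hμlam, Ne.symm hμν, Ne.symm hνlam,
              Ne.symm hμlam, eq_self_iff_true, if_true, if_false, ite_true, ite_false,
              mul_zero, zero_mul, add_zero, zero_add, sub_zero, zero_sub, sub_self, mul_one,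
              one_mul, neg_zero, neg_neg, mul_neg, neg_mul]
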